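/- For every simplicial n-skeleton S there is a canonical completion Ŝ, obtained by iteratively adjoining in each dimension k+1 ≥ n+1 exactly one (k+1)-simplex for each k-cycle (with d_i picking the i-th entry of the cycle), with the following properties: (1) if S has the Kan property, then Ŝ is a Kan complex and π_k(Ŝ,⋆) = 0 for all k ≥ n and any base point; (2) the completion preserves minimality; (3) the assignment S ↦ Ŝ is a functor sSk_n → sSet right-adjoint to the restriction R_n, i.e. there is a natural bijection Hom_sSet(K, Ŝ) ≅ Hom_{sSk_n}(R_n K, S) for every simplicial set K and every n-skeleton S. -/

import Mathlib

/-- A simplicial set, given combinatorially by sets of `n`-simplices together with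
face operators `d i : K_{n+1} → K_n` (`i ≤ n+1`) and degeneracy operators
`s i : K_n → K_{n+1}` (`i ≤ n`) satisfying the simplicial identities.
(The operators are indexed by natural numbers; their values at out-of-range
indices are irrelevant.) -/
structure SSetC where
  obj : ℕ → Type
  d : (n : ℕ) → ℕ → obj (n + 1) → obj n
  s : (n : ℕ) → ℕ → obj n → obj (n + 1)
  dd : ∀ (n i j : ℕ), i < j → j ≤ n + 2 → ∀ x : obj (n + 2),
      d n i (d (n + 1) j x) = d n (j - 1) (d (n + 1) i x)
  ss : ∀ (n i j : ℕ), i ≤ j → j ≤ n → ∀ x : obj n,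
      s (n + 1) i (s n j x) = s (n + 1) (j + 1) (s n i x)
  ds_lt : ∀ (n i j : ℕ), i < j → j ≤ n + 1 → ∀ x : obj (n + 1),
      d (n + 1) i (s (n + 1) j x) = s n (j - 1) (d n i x)
  ds_self : ∀ (n i : ℕ), i ≤ n → ∀ x : obj n, d n i (s n i x) = x
  ds_succ : ∀ (n i : ℕ), i ≤ n → ∀ x : obj n, d n (i + 1) (s n i x) = x
  ds_gt : ∀ (n i j : ℕ), j + 1 < i → i ≤ n + 2 → ∀ x : obj (n + 1),
      d (n + 1) i (s (n + 1) j x) = s n j (d n (i - 1) x)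

namespace SSetC

variable (K : SSetC)

/-- The boundary `∂x = (d_0 x, …, d_{m+1} x)` of an `(m+1)`-simplex. -/
def bdry {m : ℕ} (x : K.obj (m + 1)) : Fin (m + 2) → K.obj m := fun i => K.d m i x

/-- An `(m+2)`-tuple of `m`-simplices is an `m`-boundary if it is the boundary of
some `(m+1)`-simplex. -/
def IsBoundary {m : ℕ} (c : Fin (m + 2) → K.obj m) : Prop :=
  ∃ x : K.obj (m + 1), K.bdry x = c

/-- An `(m+2)`-tuple of `m`-simplices is compatible (an `m`-cycle) if
`d_i x_j = d_{j-1} x_i` for all `i < j` (a vacuous condition for `m = 0`). -/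
def Compat : ∀ {m : ℕ}, (Fin (m + 2) → K.obj m) → Prop
  | 0 => fun _ => True
  | m + 1 => fun c => ∀ i j : Fin (m + 3), (i : ℕ) < (j : ℕ) →
      K.d m i (c j) = K.d m ((j : ℕ) - 1) (c i)

/-- Compatibility of an `(m,k)`-horn: the entry at position `k` is disregarded. -/
def HornCompat : ∀ {m : ℕ}, ℕ → (Fin (m + 2) → K.obj m) → Prop
  | 0 => fun _ _ => True
  | m + 1 => fun k c => ∀ i j : Fin (m + 3), (i : ℕ) ≠ k → (j : ℕ) ≠ k → (i : ℕ) < (j : ℕ) →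
      K.d m i (c j) = K.d m ((j : ℕ) - 1) (c i)

/-- A simplicial set is a Kan complex if every horn has a filling. -/
def IsKan : Prop :=
  ∀ (m k : ℕ), k ≤ m + 1 → ∀ c : Fin (m + 2) → K.obj m, K.HornCompat k c →
    ∃ x : K.obj (m + 1), ∀ i : Fin (m + 2), (i : ℕ) ≠ k → K.d m i x = c i

/-- The cycle `(s_{n-1} d_0 x, …, s_{n-1} d_{n-1} x, x, y)` used to define homotopy
of `n`-simplices (for `n = 0` it is just `(x, y)`). -/
def homotopyTuple : ∀ {n : ℕ}, K.obj n → K.obj n → Fin (n + 2) → K.obj n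
  | 0 => fun x y => ![x, y]
  | n + 1 => fun x y i =>
      if (i : ℕ) < n + 1 then K.s n n (K.d n i x)
      else if (i : ℕ) = n + 1 then x else y

/-- Two `n`-simplices (with the same boundary) are homotopic if the corresponding
cycle is a boundary. -/
def Homotopic {n : ℕ} (x y : K.obj n) : Prop :=
  K.IsBoundary (K.homotopyTuple x y)

/-- `∂x = ∂y` (a vacuous condition for vertices). -/
def SameBdry : ∀ {n : ℕ}, K.obj n → K.obj n → Prop
  | 0 => fun _ _ => True
  | _ + 1 => fun x y => K.bdry x = K.bdry y

/-- The simplex `⋆_n` of the subcomplex generated by a base point. -/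
def basept (b : K.obj 0) : ∀ n : ℕ, K.obj n
  | 0 => b
  | n + 1 => K.s n 0 (basept b n)

lemma basept_succ (b : K.obj 0) (n : ℕ) : K.basept b (n + 1) = K.s n 0 (K.basept b n) := rfl

lemma s_basept (b : K.obj 0) : ∀ n i : ℕ, i ≤ n → K.s n i (K.basept b n) = K.basept b (n + 1) := by
  intro n
  induction n with
  | zero => intro i hi; interval_cases i; rfl
  | succ n ih =>
    intro i hi
    match i, hi with
    | 0, _ => rfl
    | (i + 1), hi =>
      have h1 : K.basept b (n + 1) = K.s n 0 (K.basept b n) := rfl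
      rw [h1, ← K.ss n 0 i (Nat.zero_le _) (by omega), ih i (by omega)]
      exact (K.basept_succ b (n + 1)).symm

lemma d_basept (b : K.obj 0) : ∀ n i : ℕ, i ≤ n + 1 → K.d n i (K.basept b (n + 1)) = K.basept b n := by
  intro n
  induction n with
  | zero =>
    intro i hi
    interval_cases i
    · exact K.ds_self 0 0 (le_refl 0) b
    · exact K.ds_succ 0 0 (le_refl 0) b
  | succ n ih =>
    intro i hi
    match i, hi with
    | 0, _ => exact K.ds_self (n + 1) 0 (Nat.zero_le _) _
    | 1, _ => exact K.ds_succ (n + 1) 0 (Nat.zero_le _) _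
    | (i + 2), hi =>
      have h1 : K.basept b (n + 1 + 1) = K.s (n + 1) 0 (K.basept b (n + 1)) := rfl
      rw [h1, K.ds_gt n (i + 2) 0 (by omega) (by omega)]
      show K.s n 0 (K.d n (i + 1) (K.basept b (n + 1))) = _
      rw [ih (i + 1) (by omega), K.s_basept b n 0 (Nat.zero_le _)]

/-- An `(m+1)`-simplex is spherical if all of its faces are the base point. -/
def IsSph (b : K.obj 0) {m : ℕ} (x : K.obj (m + 1)) : Prop :=
  ∀ i : Fin (m + 2), K.d m i x = K.basept b m

/-- Sphericality for simplices of arbitrary dimension (vacuous for vertices). -/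
def IsSph' (b : K.obj 0) : ∀ {n : ℕ}, K.obj n → Prop
  | 0 => fun _ => True
  | _ + 1 => fun x => K.IsSph b x

lemma basept_isSph (b : K.obj 0) (m : ℕ) : K.IsSph b (K.basept b (m + 1)) :=
  fun i => K.d_basept b m i (Nat.lt_succ_iff.mp i.isLt)

/-- The cycle `(⋆, …, ⋆, y, z, x)` witnessing `[x][y] = [z]` in `π_{m+1}`. -/
def mulTuple (b : K.obj 0) {m : ℕ} (x y z : K.obj (m + 1)) : Fin (m + 3) → K.obj (m + 1) :=
  fun i =>
    if (i : ℕ) < m then K.basept b (m + 1)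
    else if (i : ℕ) = m then y
    else if (i : ℕ) = m + 1 then z
    else x

/-- `z` is a product of `x` and `y` in the sense of the homotopy group `π_{m+1}`. -/
def MulWitness (b : K.obj 0) {m : ℕ} (x y z : K.obj (m + 1)) : Prop :=
  K.IsBoundary (K.mulTuple b x y z)

/-- Spherical `(m+1)`-simplices: the representatives of `π_{m+1}(K,⋆)`. -/
def Sph (b : K.obj 0) (m : ℕ) := {x : K.obj (m + 1) // K.IsSph b x}

/-- The homotopy group `π_{m+1}(K,⋆)` as a quotient set. -/
def piGrp (b : K.obj 0) (m : ℕ) := Quot (fun x y : K.Sph b m => K.Homotopic x.1 y.1)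

/-- The homotopy class of a spherical simplex. -/
def cls (b : K.obj 0) (m : ℕ) (x : K.Sph b m) : K.piGrp b m := Quot.mk _ x

/-- A binary operation on `π_{m+1}(K,⋆)` is induced by horn filling if it sends
classes of `x` and `y` to the class of any product witness `z`. -/
def MulDescends (b : K.obj 0) (m : ℕ) (mul : K.piGrp b m → K.piGrp b m → K.piGrp b m) : Prop :=
  ∀ x y z : K.Sph b m, K.MulWitness b x.1 y.1 z.1 → mul (K.cls b m x) (K.cls b m y) = K.cls b m z

/-- A Kan complex is minimal if homotopic simplices with equal boundaries are equal. -/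
def Minimal : Prop :=
  ∀ (n : ℕ) (x y : K.obj n), K.SameBdry x y → K.Homotopic x y → x = y

end SSetC
namespace SSetC

variable (K : SSetC)

/-- A subcomplex of a simplicial set: a family of subsets closed under the
face and degeneracy operators. -/
structure Subcomplex (K : SSetC) where
  mem : ∀ n, Set (K.obj n)
  d_mem : ∀ (n i : ℕ), i ≤ n + 1 → ∀ x ∈ mem (n + 1), K.d n i x ∈ mem n
  s_mem : ∀ (n i : ℕ), i ≤ n → ∀ x ∈ mem n, K.s n i x ∈ mem (n + 1)

/-- The subcomplex `L` is itself a Kan complex: every horn with entries in `L`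
has a filling lying in `L`. -/
def Subcomplex.IsKan {K : SSetC} (L : Subcomplex K) : Prop :=
  ∀ (m k : ℕ), k ≤ m + 1 → ∀ c : Fin (m + 2) → K.obj m,
    (∀ i : Fin (m + 2), (i : ℕ) ≠ k → c i ∈ L.mem m) → K.HornCompat k c →
    ∃ x : K.obj (m + 1), x ∈ L.mem (m + 1) ∧ ∀ i : Fin (m + 2), (i : ℕ) ≠ k → K.d m i x = c i

/-- A tuple of `m`-simplices lying in a subcomplex is a boundary in the subcomplex
if it is the boundary of a simplex of the subcomplex. -/
def IsBoundaryIn (L : Subcomplex K) {m : ℕ} (c : Fin (m + 2) → K.obj m) : Prop :=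
  ∃ x ∈ L.mem (m + 1), K.bdry x = c

/-- Homotopy of simplices realized inside a subcomplex. -/
def HomotopicIn (L : Subcomplex K) {n : ℕ} (x y : K.obj n) : Prop :=
  K.IsBoundaryIn L (K.homotopyTuple x y)

/-- The cycle `(h_L, s_m d_1 x, …, s_m d_m x, x, y)` used to define relative homotopy. -/
def relTuple {m : ℕ} (hL x y : K.obj (m + 1)) : Fin (m + 3) → K.obj (m + 1) :=
  fun i =>
    if (i : ℕ) = 0 then hL
    else if (i : ℕ) < m + 1 then K.s m m (K.d m i x)
    else if (i : ℕ) = m + 1 then x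
    else y

/-- Two `(m+1)`-simplices are homotopic relative to a subcomplex `L`. -/
def HomotopicRel (L : Subcomplex K) {m : ℕ} (x y : K.obj (m + 1)) : Prop :=
  (∀ i : ℕ, 1 ≤ i → i ≤ m + 1 → K.d m i x = K.d m i y) ∧
  K.d m 0 x ∈ L.mem m ∧ K.d m 0 y ∈ L.mem m ∧
  ∃ hL ∈ L.mem (m + 1), K.IsBoundary (K.relTuple hL x y)

/-- Representatives of the relative homotopy group `π_{m+1}(K,L,⋆)`:
`∂x = (l, ⋆, …, ⋆)` with `l ∈ L`. -/
def IsRelSph (L : Subcomplex K) (b : K.obj 0) {m : ℕ} (x : K.obj (m + 1)) : Prop :=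
  K.d m 0 x ∈ L.mem m ∧ ∀ i : Fin (m + 2), 1 ≤ (i : ℕ) → K.d m i x = K.basept b m

def RelSph (L : Subcomplex K) (b : K.obj 0) (m : ℕ) := {x : K.obj (m + 1) // K.IsRelSph L b x}

/-- The relative homotopy group `π_{m+1}(K,L,⋆)` as a quotient set. -/
def piRel (L : Subcomplex K) (b : K.obj 0) (m : ℕ) :=
  Quot (fun x y : K.RelSph L b m => K.HomotopicRel L x.1 y.1)

def relCls (L : Subcomplex K) (b : K.obj 0) (m : ℕ) (x : K.RelSph L b m) : K.piRel L b m :=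
  Quot.mk _ x

/-- The cycle `(h, ⋆, …, ⋆, y, z, x)` (with `h ∈ L`) witnessing `[x][y] = [z]` in
the relative homotopy group `π_{m+2}(K,L,⋆)`. -/
def relMulTuple (b : K.obj 0) {m : ℕ} (h x y z : K.obj (m + 2)) : Fin (m + 4) → K.obj (m + 2) :=
  fun i =>
    if (i : ℕ) = 0 then h
    else if (i : ℕ) < m + 1 then K.basept b (m + 2)
    else if (i : ℕ) = m + 1 then y
    else if (i : ℕ) = m + 2 then z
    else x

def RelMulWitness (L : Subcomplex K) (b : K.obj 0) {m : ℕ} (x y z : K.obj (m + 2)) : Prop :=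
  ∃ h ∈ L.mem (m + 2), K.IsBoundary (K.relMulTuple b h x y z)

def RelMulDescends (L : Subcomplex K) (b : K.obj 0) (m : ℕ)
    (mul : K.piRel L b (m + 1) → K.piRel L b (m + 1) → K.piRel L b (m + 1)) : Prop :=
  ∀ x y z : K.RelSph L b (m + 1), K.RelMulWitness L b x.1 y.1 z.1 →
    mul (K.relCls L b (m + 1) x) (K.relCls L b (m + 1) y) = K.relCls L b (m + 1) z

/-- The subcomplex generated by a base point. -/
def ptSub (b : K.obj 0) : Subcomplex K where
  mem n := {x | x = K.basept b n}
  d_mem n i hi x hx := by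
    simp only [Set.mem_setOf_eq] at *
    rw [hx]; exact K.d_basept b n i hi
  s_mem n i hi x hx := by
    simp only [Set.mem_setOf_eq] at *
    rw [hx]; exact K.s_basept b n i hi

/-- The full subcomplex. -/
def topSub : Subcomplex K where
  mem _ := Set.univ
  d_mem _ _ _ _ _ := trivial
  s_mem _ _ _ _ _ := trivial

/-- The empty subcomplex. -/
def botSub : Subcomplex K where
  mem _ := ∅
  d_mem _ _ _ _ h := h.elim
  s_mem _ _ _ _ h := h.elim

/-- A simplicial map between simplicial sets. -/
structure SMap (K L : SSetC) where
  app : ∀ n, K.obj n → L.obj n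
  comm_d : ∀ (n i : ℕ), i ≤ n + 1 → ∀ x : K.obj (n + 1), app n (K.d n i x) = L.d n i (app (n + 1) x)
  comm_s : ∀ (n i : ℕ), i ≤ n → ∀ x : K.obj n, app (n + 1) (K.s n i x) = L.s n i (app n x)

/-- The identity simplicial map. -/
def SMap.idMap (K : SSetC) : SMap K K :=
  ⟨fun _ x => x, fun _ _ _ _ => rfl, fun _ _ _ _ => rfl⟩

/-- Composition of simplicial maps. -/
def SMap.comp {K L M : SSetC} (f : SMap K L) (g : SMap L M) : SMap K M where
  app n x := g.app n (f.app n x)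
  comm_d n i hi x := by rw [f.comm_d n i hi, g.comm_d n i hi]
  comm_s n i hi x := by rw [f.comm_s n i hi, g.comm_s n i hi]

lemma SMap.basept_app {K L : SSetC} (f : SMap K L) (b : K.obj 0) :
    ∀ n, f.app n (K.basept b n) = L.basept (f.app 0 b) n := by
  intro n
  induction n with
  | zero => rfl
  | succ n ih =>
    have h1 : K.basept b (n + 1) = K.s n 0 (K.basept b n) := rfl
    rw [h1, f.comm_s n 0 (Nat.zero_le _), ih]
    rfl

/-- The product of two simplicial sets. -/
def prodSSet (K L : SSetC) : SSetC where
  obj n := K.obj n × L.obj n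
  d n i x := (K.d n i x.1, L.d n i x.2)
  s n i x := (K.s n i x.1, L.s n i x.2)
  dd n i j h1 h2 x := Prod.ext (K.dd n i j h1 h2 x.1) (L.dd n i j h1 h2 x.2)
  ss n i j h1 h2 x := Prod.ext (K.ss n i j h1 h2 x.1) (L.ss n i j h1 h2 x.2)
  ds_lt n i j h1 h2 x := Prod.ext (K.ds_lt n i j h1 h2 x.1) (L.ds_lt n i j h1 h2 x.2)
  ds_self n i h x := Prod.ext (K.ds_self n i h x.1) (L.ds_self n i h x.2)
  ds_succ n i h x := Prod.ext (K.ds_succ n i h x.1) (L.ds_succ n i h x.2)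
  ds_gt n i j h1 h2 x := Prod.ext (K.ds_gt n i j h1 h2 x.1) (L.ds_gt n i j h1 h2 x.2)

/-- The product of a family of simplicial sets. -/
def piSSet {I : Type} (F : I → SSetC) : SSetC where
  obj n := ∀ i, (F i).obj n
  d n j x := fun i => (F i).d n j (x i)
  s n j x := fun i => (F i).s n j (x i)
  dd n i j h1 h2 x := funext fun a => (F a).dd n i j h1 h2 (x a)
  ss n i j h1 h2 x := funext fun a => (F a).ss n i j h1 h2 (x a)
  ds_lt n i j h1 h2 x := funext fun a => (F a).ds_lt n i j h1 h2 (x a)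
  ds_self n i h x := funext fun a => (F a).ds_self n i h (x a)
  ds_succ n i h x := funext fun a => (F a).ds_succ n i h (x a)
  ds_gt n i j h1 h2 x := funext fun a => (F a).ds_gt n i j h1 h2 (x a)

/-- The coproduct (disjoint union) of a family of simplicial sets. -/
def sigmaSSet {I : Type} (F : I → SSetC) : SSetC where
  obj n := Σ i, (F i).obj n
  d n j x := ⟨x.1, (F x.1).d n j x.2⟩
  s n j x := ⟨x.1, (F x.1).s n j x.2⟩
  dd n i j h1 h2 x := congrArg (Sigma.mk x.1) ((F x.1).dd n i j h1 h2 x.2)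
  ss n i j h1 h2 x := congrArg (Sigma.mk x.1) ((F x.1).ss n i j h1 h2 x.2)
  ds_lt n i j h1 h2 x := congrArg (Sigma.mk x.1) ((F x.1).ds_lt n i j h1 h2 x.2)
  ds_self n i h x := congrArg (Sigma.mk x.1) ((F x.1).ds_self n i h x.2)
  ds_succ n i h x := congrArg (Sigma.mk x.1) ((F x.1).ds_succ n i h x.2)
  ds_gt n i j h1 h2 x := congrArg (Sigma.mk x.1) ((F x.1).ds_gt n i j h1 h2 x.2)

/-- The one-point simplicial set. -/
def ptSSet : SSetC where
  obj _ := PUnit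
  d _ _ _ := PUnit.unit
  s _ _ _ := PUnit.unit
  dd _ _ _ _ _ _ := rfl
  ss _ _ _ _ _ _ := rfl
  ds_lt _ _ _ _ _ _ := rfl
  ds_self _ _ _ _ := rfl
  ds_succ _ _ _ _ := rfl
  ds_gt _ _ _ _ _ _ := rfl

/-- The standard `1`-simplex `Δ¹`: an `n`-simplex is a monotone map `[n] → [1]`,
encoded by the number `k ∈ {0, …, n+1}` of vertices sent to `0`. -/
def deltaOne : SSetC where
  obj n := Fin (n + 2)
  d n i k := ⟨if i < (k : ℕ) then (k : ℕ) - 1 else min (k : ℕ) (n + 1), by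
    have := k.isLt; split_ifs <;> omega⟩
  s n i k := ⟨if i < (k : ℕ) then (k : ℕ) + 1 else (k : ℕ), by
    have := k.isLt; split_ifs <;> omega⟩
  dd := by
    intro n i j h1 h2 x
    apply Fin.ext
    have := x.isLt
    simp only []
    split_ifs <;> omega
  ss := by
    intro n i j h1 h2 x
    apply Fin.ext
    have := x.isLt
    simp only []
    split_ifs <;> omega
  ds_lt := by
    intro n i j h1 h2 x
    apply Fin.ext
    have := x.isLt
    simp only []
    split_ifs <;> omega
  ds_self := by
    intro n i h x
    apply Fin.ext
    have := x.isLt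
    simp only []
    split_ifs <;> omega
  ds_succ := by
    intro n i h x
    apply Fin.ext
    have := x.isLt
    simp only []
    split_ifs <;> omega
  ds_gt := by
    intro n i j h1 h2 x
    apply Fin.ext
    have := x.isLt
    simp only []
    split_ifs <;> omega

/-- The `0`-end of `Δ¹` in dimension `n` (all vertices sent to `0`). -/
def vertexZero (n : ℕ) : Fin (n + 2) := ⟨n + 1, by omega⟩

/-- The `1`-end of `Δ¹` in dimension `n` (all vertices sent to `1`). -/
def vertexOne (n : ℕ) : Fin (n + 2) := ⟨0, by omega⟩

end SSetC
/-- A simplicial `N`-skeleton: sets `S_0, …, S_N` with face and degeneracy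
operators satisfying the simplicial identities in the range where they are
defined.  (`obj k` for `k > N` is irrelevant: no operators or morphism
components refer to it.) -/
structure SkelC (N : ℕ) where
  obj : ℕ → Type
  d : ∀ k, k + 1 ≤ N → ℕ → obj (k + 1) → obj k
  s : ∀ k, k + 1 ≤ N → ℕ → obj k → obj (k + 1)
  dd : ∀ (k : ℕ) (h : k + 2 ≤ N) (i j : ℕ), i < j → j ≤ k + 2 → ∀ x : obj (k + 2),
      d k (Nat.le_of_succ_le h) i (d (k + 1) h j x) =
      d k (Nat.le_of_succ_le h) (j - 1) (d (k + 1) h i x)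
  ss : ∀ (k : ℕ) (h : k + 2 ≤ N) (i j : ℕ), i ≤ j → j ≤ k → ∀ x : obj k,
      s (k + 1) h i (s k (Nat.le_of_succ_le h) j x) =
      s (k + 1) h (j + 1) (s k (Nat.le_of_succ_le h) i x)
  ds_lt : ∀ (k : ℕ) (h : k + 2 ≤ N) (i j : ℕ), i < j → j ≤ k + 1 → ∀ x : obj (k + 1),
      d (k + 1) h i (s (k + 1) h j x) =
      s k (Nat.le_of_succ_le h) (j - 1) (d k (Nat.le_of_succ_le h) i x)
  ds_self : ∀ (k : ℕ) (h : k + 1 ≤ N) (i : ℕ), i ≤ k → ∀ x : obj k,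
      d k h i (s k h i x) = x
  ds_succ : ∀ (k : ℕ) (h : k + 1 ≤ N) (i : ℕ), i ≤ k → ∀ x : obj k,
      d k h (i + 1) (s k h i x) = x
  ds_gt : ∀ (k : ℕ) (h : k + 2 ≤ N) (i j : ℕ), j + 1 < i → i ≤ k + 2 → ∀ x : obj (k + 1),
      d (k + 1) h i (s (k + 1) h j x) =
      s k (Nat.le_of_succ_le h) j (d k (Nat.le_of_succ_le h) (i - 1) x)

/-- A map of simplicial `N`-skeletons. -/
structure SkelMap {N : ℕ} (S T : SkelC N) where
  app : ∀ k, k ≤ N → S.obj k → T.obj k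
  comm_d : ∀ (k : ℕ) (h : k + 1 ≤ N) (i : ℕ), i ≤ k + 1 → ∀ x : S.obj (k + 1),
    app k (Nat.le_of_succ_le h) (S.d k h i x) = T.d k h i (app (k + 1) h x)
  comm_s : ∀ (k : ℕ) (h : k + 1 ≤ N) (i : ℕ), i ≤ k → ∀ x : S.obj k,
    app (k + 1) h (S.s k h i x) = T.s k h i (app k (Nat.le_of_succ_le h) x)

namespace SkelC

/-- The restriction functor `R_N : sSet → sSk_N`, forgetting all dimensions
above `N`. -/
def skelRestrict (N : ℕ) (K : SSetC) : SkelC N where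
  obj := K.obj
  d k _ := K.d k
  s k _ := K.s k
  dd k _ i j h1 h2 x := K.dd k i j h1 h2 x
  ss k _ i j h1 h2 x := K.ss k i j h1 h2 x
  ds_lt k _ i j h1 h2 x := K.ds_lt k i j h1 h2 x
  ds_self k _ i hi x := K.ds_self k i hi x
  ds_succ k _ i hi x := K.ds_succ k i hi x
  ds_gt k _ i j h1 h2 x := K.ds_gt k i j h1 h2 x

variable {N : ℕ} (S : SkelC N)

/-- Compatibility (cycle condition) for tuples of `m`-simplices of a skeleton. -/
def SkelCompat : ∀ {m : ℕ}, m ≤ N → (Fin (m + 2) → S.obj m) → Prop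
  | 0 => fun _ _ => True
  | m + 1 => fun h c => ∀ i j : Fin (m + 3), (i : ℕ) < (j : ℕ) →
      S.d m h i (c j) = S.d m h ((j : ℕ) - 1) (c i)

/-- Horn compatibility (the `k`-th entry is disregarded). -/
def SkelHornCompat : ∀ {m : ℕ}, m ≤ N → ℕ → (Fin (m + 2) → S.obj m) → Prop
  | 0 => fun _ _ _ => True
  | m + 1 => fun h k c => ∀ i j : Fin (m + 3), (i : ℕ) ≠ k → (j : ℕ) ≠ k →
      (i : ℕ) < (j : ℕ) → S.d m h i (c j) = S.d m h ((j : ℕ) - 1) (c i)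

/-- `∂x = ∂y` inside a skeleton. -/
def SkelSameBdry : ∀ {m : ℕ}, m ≤ N → S.obj m → S.obj m → Prop
  | 0 => fun _ _ _ => True
  | m + 1 => fun h x y => ∀ i : Fin (m + 2), S.d m h i x = S.d m h i y

/-- The homotopy cycle `(s_{m-1} d_0 x, …, s_{m-1} d_{m-1} x, x, y)` in a skeleton. -/
def skelHomotopyTuple : ∀ {m : ℕ}, m + 1 ≤ N → S.obj m → S.obj m → Fin (m + 2) → S.obj m
  | 0 => fun _ x y => ![x, y]
  | m + 1 => fun h x y i =>
      if (i : ℕ) < m + 1 then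
        S.s m (Nat.le_of_succ_le h) m (S.d m (Nat.le_of_succ_le h) i x)
      else if (i : ℕ) = m + 1 then x else y

/-- Homotopy of `m`-simplices of a skeleton (for `m + 1 ≤ N`, so that the
filling simplex is available). -/
def SkelHomotopic {m : ℕ} (h : m + 1 ≤ N) (x y : S.obj m) : Prop :=
  ∃ z : S.obj (m + 1), ∀ i : Fin (m + 2), S.d m h i z = S.skelHomotopyTuple h x y i

/-- A minimal skeleton: homotopic simplices are equal, and top-dimensional
simplices with equal boundaries are equal. -/
def SkelMinimal : Prop :=
  (∀ (m : ℕ) (h : m + 1 ≤ N) (x y : S.obj m),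
    S.SkelSameBdry (Nat.le_of_succ_le h) x y → S.SkelHomotopic h x y → x = y) ∧
  (∀ x y : S.obj N, S.SkelSameBdry (le_refl N) x y → x = y)

/-- The Kan property for a skeleton: horns below the top dimension have
fillings, and top-dimensional horns can be completed to cycles. -/
def SkelIsKan : Prop :=
  (∀ (m : ℕ) (h : m + 1 ≤ N) (k : ℕ), k ≤ m + 1 → ∀ c : Fin (m + 2) → S.obj m,
    S.SkelHornCompat (Nat.le_of_succ_le h) k c →
    ∃ x : S.obj (m + 1), ∀ i : Fin (m + 2), (i : ℕ) ≠ k → S.d m h i x = c i) ∧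
  (∀ k : ℕ, (hk : k ≤ N + 1) → ∀ c : Fin (N + 2) → S.obj N,
    S.SkelHornCompat (le_refl N) k c →
    ∃ xk : S.obj N, S.SkelCompat (le_refl N) (Function.update c ⟨k, by omega⟩ xk))

end SkelC

namespace SkelCompletion

/-- A window of three consecutive levels `m-1, m, m+1` of a simplicial set
under construction, with all simplicial identities relating them. -/
structure Win (m : ℕ) : Type 1 where
  A' : Type
  A : Type
  B : Type
  dA : ℕ → A → A'
  dB : ℕ → B → A
  sA' : 1 ≤ m → ℕ → A' → A
  sA : ℕ → A → B
  dd : ∀ i j : ℕ, i < j → j ≤ m + 1 → ∀ x : B,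
    dA i (dB j x) = dA (j - 1) (dB i x)
  ss : ∀ (h1 : 1 ≤ m) (i j : ℕ), i ≤ j → j + 1 ≤ m → ∀ x : A',
    sA i (sA' h1 j x) = sA (j + 1) (sA' h1 i x)
  ds_lt : ∀ (h1 : 1 ≤ m) (i j : ℕ), i < j → j ≤ m → ∀ x : A,
    dB i (sA j x) = sA' h1 (j - 1) (dA i x)
  ds_self : ∀ i : ℕ, i ≤ m → ∀ x : A, dB i (sA i x) = x
  ds_succ : ∀ i : ℕ, i ≤ m → ∀ x : A, dB (i + 1) (sA i x) = x
  ds_gt : ∀ (h1 : 1 ≤ m) (i j : ℕ), j + 1 < i → i ≤ m + 1 → ∀ x : A,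
    dB i (sA j x) = sA' h1 j (dA (i - 1) x)

/-- Extension data: a new top level `m+2` over the window `W`, with all
simplicial identities relating it to the two levels below. -/
structure Ext (m : ℕ) (W : Win m) : Type 1 where
  B : Type
  dB' : ℕ → B → W.B
  sA2 : ℕ → W.B → B
  dd2 : ∀ i j : ℕ, i < j → j ≤ m + 2 → ∀ x : B,
    W.dB i (dB' j x) = W.dB (j - 1) (dB' i x)
  ss2 : ∀ i j : ℕ, i ≤ j → j ≤ m → ∀ x : W.A,
    sA2 i (W.sA j x) = sA2 (j + 1) (W.sA i x)
  ds_lt2 : ∀ i j : ℕ, i < j → j ≤ m + 1 → ∀ x : W.B,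
    dB' i (sA2 j x) = W.sA (j - 1) (W.dB i x)
  ds_self2 : ∀ i : ℕ, i ≤ m + 1 → ∀ x : W.B, dB' i (sA2 i x) = x
  ds_succ2 : ∀ i : ℕ, i ≤ m + 1 → ∀ x : W.B, dB' (i + 1) (sA2 i x) = x
  ds_gt2 : ∀ i j : ℕ, j + 1 < i → i ≤ m + 2 → ∀ x : W.B,
    dB' i (sA2 j x) = W.sA j (W.dB (i - 1) x)

/-- Shifting a window up by one level using extension data. -/
def nextWin {m : ℕ} (W : Win m) (E : Ext m W) : Win (m + 1) where
  A' := W.A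
  A := W.B
  B := E.B
  dA := W.dB
  dB := E.dB'
  sA' := fun _ => W.sA
  sA := E.sA2
  dd := E.dd2
  ss := fun _ i j hij hj x => E.ss2 i j hij (by omega) x
  ds_lt := fun _ i j hij hj x => E.ds_lt2 i j hij hj x
  ds_self := E.ds_self2
  ds_succ := E.ds_succ2
  ds_gt := fun _ i j hji hi x => E.ds_gt2 i j hji hi x

/-- The cycles over the top level of a window: candidates for `m+2`-simplices. -/
def CycB {m : ℕ} (W : Win m) : Type :=
  {c : Fin (m + 3) → W.B //
    ∀ a b : Fin (m + 3), (a : ℕ) < (b : ℕ) → W.dB a (c b) = W.dB ((b : ℕ) - 1) (c a)}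

/-- The boundary tuple of the degeneracy `s_i x` of a top-level simplex. -/
def stup {m : ℕ} (W : Win m) (i : ℕ) (x : W.B) (a : ℕ) : W.B :=
  if a < i then W.sA (i - 1) (W.dB a x)
  else if a ≤ i + 1 then x
  else W.sA i (W.dB (a - 1) x)

lemma stup_lt {m : ℕ} (W : Win m) {i a : ℕ} (x : W.B) (h : a < i) :
    stup W i x a = W.sA (i - 1) (W.dB a x) := by
  simp only [stup]; rw [if_pos h]

lemma stup_mid {m : ℕ} (W : Win m) {i a : ℕ} (x : W.B) (h1 : ¬ a < i) (h2 : a ≤ i + 1) :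
    stup W i x a = x := by
  simp only [stup]; rw [if_neg h1, if_pos h2]

lemma stup_gt {m : ℕ} (W : Win m) {i a : ℕ} (x : W.B) (h : i + 1 < a) :
    stup W i x a = W.sA i (W.dB (a - 1) x) := by
  simp only [stup]; rw [if_neg (by omega), if_neg (by omega)]

lemma stup_compat {m : ℕ} (W : Win m) (i : ℕ) (hi : i ≤ m + 1) (x : W.B) :
    ∀ a b : ℕ, a < b → b ≤ m + 2 →
      W.dB a (stup W i x b) = W.dB (b - 1) (stup W i x a) := by
  intro a b hab hb
  by_cases hb1 : b < i
  · rw [stup_lt W x hb1, stup_lt W x (show a < i by omega)]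
    have hm : 1 ≤ m := by omega
    rw [W.ds_lt hm a (i-1) (by omega) (by omega), W.ds_lt hm (b-1) (i-1) (by omega) (by omega),
      W.dd a b hab (by omega)]
  · by_cases hb2 : b ≤ i + 1
    · rw [stup_mid W x (by omega) hb2]
      by_cases ha1 : a < i
      · rw [stup_lt W x ha1]
        rcases (show b = i ∨ b = i + 1 by omega) with h | h
        · rw [show b - 1 = i - 1 by omega, W.ds_self (i-1) (by omega)]
        · rw [show b - 1 = (i-1) + 1 by omega, W.ds_succ (i-1) (by omega)]
      · rw [stup_mid W x ha1 (by omega), show b - 1 = a by omega]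
    · rw [stup_gt W x (by omega)]
      by_cases ha1 : a < i
      · rw [stup_lt W x ha1]
        have hm : 1 ≤ m := by omega
        rw [W.ds_lt hm a i ha1 (by omega), W.ds_gt hm (b-1) (i-1) (by omega) (by omega),
          W.dd a (b-1) (by omega) (by omega)]
      · by_cases ha2 : a ≤ i + 1
        · rw [stup_mid W x ha1 ha2]
          rcases (show a = i ∨ a = i + 1 by omega) with h | h
          · rw [h, W.ds_self i (by omega)]
          · rw [h, W.ds_succ i (by omega)]
        · rw [stup_gt W x (by omega)]
          have hm : 1 ≤ m := by omega
          rw [W.ds_gt hm a i (by omega) (by omega), W.ds_gt hm (b-1) i (by omega) (by omega),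
            W.dd (a-1) (b-1) (by omega) (by omega)]

/-- The degeneracy of a top-level simplex, as a cycle. -/
def sTup {m : ℕ} (W : Win m) (i : ℕ) (h : i ≤ m + 1) (x : W.B) : CycB W :=
  ⟨fun j => stup W i x j,
   fun a b hab => stup_compat W i h x a b hab (by have := b.isLt; omega)⟩

/-- Face maps out of the cycle level. -/
def cdB' {m : ℕ} (W : Win m) (i : ℕ) (c : CycB W) : W.B :=
  if h : i ≤ m + 2 then c.1 ⟨i, by omega⟩ else c.1 ⟨0, by omega⟩

lemma cdB'_eq {m : ℕ} (W : Win m) (c : CycB W) {i : ℕ} (h : i ≤ m + 2) :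
    cdB' W i c = c.1 ⟨i, by omega⟩ := dif_pos h

lemma cdB'_eq' {m : ℕ} (W : Win m) (c : CycB W) (i : Fin (m + 3)) :
    cdB' W (i : ℕ) c = c.1 i := by
  rw [cdB'_eq W c (show (i:ℕ) ≤ m + 2 by have := i.isLt; omega)]

/-- Degeneracies into the cycle level. -/
def csA2 {m : ℕ} (W : Win m) (i : ℕ) (x : W.B) : CycB W :=
  if h : i ≤ m + 1 then sTup W i h x else sTup W 0 (Nat.zero_le _) x

lemma csA2_eq {m : ℕ} (W : Win m) (x : W.B) {i : ℕ} (h : i ≤ m + 1) :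
    csA2 W i x = sTup W i h x := dif_pos h

/-- The cycle-type extension of a window. -/
def cycExt {m : ℕ} (W : Win m) : Ext m W where
  B := CycB W
  dB' := cdB' W
  sA2 := csA2 W
  dd2 := by
    intro i j hij hj x
    rw [cdB'_eq W x hj, cdB'_eq W x (show i ≤ m + 2 by omega)]
    exact x.2 ⟨i, by omega⟩ ⟨j, by omega⟩ hij
  ss2 := by
    intro i j hij hj x
    rw [csA2_eq W _ (show i ≤ m + 1 by omega), csA2_eq W _ (show j + 1 ≤ m + 1 by omega)]
    apply Subtype.ext
    funext k
    obtain ⟨a, ha⟩ := k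
    show stup W i (W.sA j x) a = stup W (j + 1) (W.sA i x) a
    by_cases h1 : a < i
    · rw [stup_lt W _ h1, stup_lt W _ (show a < j + 1 by omega),
        show j + 1 - 1 = j by omega]
      have hm : 1 ≤ m := by omega
      rw [W.ds_lt hm a j (by omega) hj, W.ds_lt hm a i (by omega) (by omega),
        W.ss hm (i-1) (j-1) (by omega) (by omega), show j - 1 + 1 = j by omega]
    · by_cases h2 : a ≤ i + 1
      · rw [stup_mid W _ h1 h2]
        by_cases h3 : a < j + 1
        · rw [stup_lt W _ h3, show j + 1 - 1 = j by omega]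
          rcases (show a = i ∨ a = i + 1 by omega) with h | h
          · rw [h, W.ds_self i (by omega)]
          · rw [h, W.ds_succ i (by omega)]
        · rw [stup_mid W _ h3 (by omega), show i = j by omega]
      · rw [stup_gt W _ (by omega)]
        by_cases h3 : a < j + 1
        · rw [stup_lt W _ h3, show j + 1 - 1 = j by omega]
          have hm : 1 ≤ m := by omega
          rw [W.ds_lt hm (a-1) j (by omega) hj, W.ds_gt hm a i (by omega) (by omega),
            W.ss hm i (j-1) (by omega) (by omega), show j - 1 + 1 = j by omega]
        · by_cases h4 : a ≤ j + 2
          · rw [stup_mid W _ h3 h4]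
            rcases (show a - 1 = j ∨ a - 1 = j + 1 by omega) with h | h
            · rw [h, W.ds_self j hj]
            · rw [h, W.ds_succ j hj]
          · rw [stup_gt W _ (by omega)]
            have hm : 1 ≤ m := by omega
            rw [W.ds_gt hm (a-1) j (by omega) (by omega), W.ds_gt hm (a-1) i (by omega) (by omega),
              W.ss hm i j hij (by omega)]
  ds_lt2 := by
    intro i j hij hj x
    rw [csA2_eq W _ hj, cdB'_eq W _ (show i ≤ m + 2 by omega)]
    show stup W j x i = W.sA (j - 1) (W.dB i x)
    rw [stup_lt W x hij]
  ds_self2 := by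
    intro i hi x
    rw [csA2_eq W _ hi, cdB'_eq W _ (show i ≤ m + 2 by omega)]
    show stup W i x i = x
    rw [stup_mid W x (by omega) (by omega)]
  ds_succ2 := by
    intro i hi x
    rw [csA2_eq W _ hi, cdB'_eq W _ (show i + 1 ≤ m + 2 by omega)]
    show stup W i x (i + 1) = x
    rw [stup_mid W x (by omega) (by omega)]
  ds_gt2 := by
    intro i j hji hi x
    rw [csA2_eq W _ (show j ≤ m + 1 by omega), cdB'_eq W _ hi]
    show stup W j x i = W.sA j (W.dB (i - 1) x)
    rw [stup_gt W x (by omega)]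

/-- Unique horn filling in the cycle extension. -/
lemma cyc_fill {m : ℕ} (W : Win m) (c : Fin (m + 3) → W.B)
    (hc : ∀ a b : Fin (m + 3), (a : ℕ) < (b : ℕ) → W.dB a (c b) = W.dB ((b : ℕ) - 1) (c a)) :
    ∃! x : (cycExt W).B, ∀ i : Fin (m + 3), (cycExt W).dB' (i : ℕ) x = c i := by
  refine ⟨⟨c, hc⟩, fun i => ?_, fun y hy => ?_⟩
  · rw [show (cycExt W).dB' (i:ℕ) (⟨c, hc⟩ : CycB W) = c i from cdB'_eq' W _ i]
  · apply Subtype.ext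
    funext i
    rw [show y.1 i = (cycExt W).dB' (i:ℕ) y from (cdB'_eq' W y i).symm, hy i]

section Tower

variable {N : ℕ} (S : SkelC N)

/-- Data about the level `m+2` sitting on top of a window. -/
structure TopData (m : ℕ) (W : Win m) (eB : m + 1 ≤ N → W.B ≃ S.obj (m + 1)) : Type 1 where
  E : Ext m W
  fillE : N ≤ m + 1 → ∀ c : Fin (m + 3) → W.B,
    (∀ a b : Fin (m + 3), (a : ℕ) < (b : ℕ) → W.dB a (c b) = W.dB ((b : ℕ) - 1) (c a)) →
    ∃! x : E.B, ∀ i : Fin (m + 3), E.dB' (i : ℕ) x = c i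
  eC : (h : m + 2 ≤ N) → E.B ≃ S.obj (m + 2)
  dcomm2 : ∀ (h : m + 2 ≤ N) (i : ℕ), i ≤ m + 2 → ∀ x : E.B,
    eB (Nat.le_of_succ_le h) (E.dB' i x) = S.d (m + 1) h i (eC h x)
  scomm2 : ∀ (h : m + 2 ≤ N) (i : ℕ), i ≤ m + 1 → ∀ x : W.B,
    eC h (E.sA2 i x) = S.s (m + 1) h i (eB (Nat.le_of_succ_le h) x)

/-- Building the next level: either from `S` (in range) or by cycles. -/
def mkTop {m : ℕ} (W : Win m)
    (eA : m ≤ N → (W.A ≃ S.obj m)) (eB : (h : m + 1 ≤ N) → W.B ≃ S.obj (m + 1))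
    (dcomm : ∀ (h : m + 1 ≤ N) (i : ℕ), i ≤ m + 1 → ∀ x : W.B,
      eA (Nat.le_of_succ_le h) (W.dB i x) = S.d m h i (eB h x))
    (scomm : ∀ (h : m + 1 ≤ N) (i : ℕ), i ≤ m → ∀ x : W.A,
      eB h (W.sA i x) = S.s m h i (eA (Nat.le_of_succ_le h) x)) :
    TopData S m W eB :=
  if h2 : m + 2 ≤ N then
    { E :=
        { B := S.obj (m + 2)
          dB' := fun i x => (eB (Nat.le_of_succ_le h2)).symm (S.d (m + 1) h2 i x)
          sA2 := fun i x => S.s (m + 1) h2 i (eB (Nat.le_of_succ_le h2) x)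
          dd2 := by
            intro i j hij hj x
            have hB := Nat.le_of_succ_le h2
            apply (eA (Nat.le_of_succ_le hB)).injective
            rw [dcomm hB i (by omega), dcomm hB (j - 1) (by omega),
              Equiv.apply_symm_apply, Equiv.apply_symm_apply, S.dd m h2 i j hij hj x]
          ss2 := by
            intro i j hij hj x
            have hB := Nat.le_of_succ_le h2
            show S.s (m + 1) h2 i (eB hB (W.sA j x)) = S.s (m + 1) h2 (j + 1) (eB hB (W.sA i x))
            rw [scomm hB j hj, scomm hB i (le_trans hij hj), S.ss m h2 i j hij hj]
          ds_lt2 := by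
            intro i j hij hj x
            have hB := Nat.le_of_succ_le h2
            apply (eB hB).injective
            rw [Equiv.apply_symm_apply, S.ds_lt m h2 i j hij hj,
              scomm hB (j - 1) (by omega), dcomm hB i (by omega)]
          ds_self2 := by
            intro i hi x
            have hB := Nat.le_of_succ_le h2
            show (eB hB).symm (S.d (m + 1) h2 i (S.s (m + 1) h2 i (eB hB x))) = x
            rw [S.ds_self (m + 1) h2 i hi, Equiv.symm_apply_apply]
          ds_succ2 := by
            intro i hi x
            have hB := Nat.le_of_succ_le h2
            show (eB hB).symm (S.d (m + 1) h2 (i + 1) (S.s (m + 1) h2 i (eB hB x))) = x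
            rw [S.ds_succ (m + 1) h2 i hi, Equiv.symm_apply_apply]
          ds_gt2 := by
            intro i j hji hi x
            have hB := Nat.le_of_succ_le h2
            apply (eB hB).injective
            rw [Equiv.apply_symm_apply, S.ds_gt m h2 i j hji hi,
              scomm hB j (by omega), dcomm hB (i - 1) (by omega)] }
      fillE := fun hN => absurd hN (by omega)
      eC := fun _ => Equiv.refl _
      dcomm2 := fun h i hi x => Equiv.apply_symm_apply _ _
      scomm2 := fun h i hi x => rfl }
  else
    { E := cycExt W
      fillE := fun _ c hc => cyc_fill W c hc
      eC := fun h => absurd h h2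
      dcomm2 := fun h => absurd h h2
      scomm2 := fun h => absurd h h2 }

/-- The state of the construction at level `m`. -/
structure St (m : ℕ) : Type 1 where
  W : Win m
  eA : m ≤ N → (W.A ≃ S.obj m)
  eB : (h : m + 1 ≤ N) → W.B ≃ S.obj (m + 1)
  dcomm1 : ∀ (h : m + 1 ≤ N) (i : ℕ), i ≤ m + 1 → ∀ x : W.B,
    eA (Nat.le_of_succ_le h) (W.dB i x) = S.d m h i (eB h x)
  scomm1 : ∀ (h : m + 1 ≤ N) (i : ℕ), i ≤ m → ∀ x : W.A,
    eB h (W.sA i x) = S.s m h i (eA (Nat.le_of_succ_le h) x)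
  fillW : N ≤ m → ∀ c : Fin (m + 2) → W.A,
    (∀ a b : Fin (m + 2), (a : ℕ) < (b : ℕ) → W.dA a (c b) = W.dA ((b : ℕ) - 1) (c a)) →
    ∃! x : W.B, ∀ i : Fin (m + 2), W.dB (i : ℕ) x = c i
  lowTriv : N ≤ m → m = 0 → ∀ x y : W.A', x = y
  top : TopData S m W eB

/-- The step of the construction. -/
def stepFn {m : ℕ} (p : St S m) : St S (m + 1) where
  W := nextWin p.W p.top.E
  eA := p.eB
  eB := p.top.eC
  dcomm1 := p.top.dcomm2
  scomm1 := p.top.scomm2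
  fillW := p.top.fillE
  lowTriv := fun _ h => absurd h (by omega)
  top := mkTop S (nextWin p.W p.top.E) p.eB p.top.eC p.top.dcomm2 p.top.scomm2

/-- The initial window when `N = 0`. -/
def win0zero : Win 0 where
  A' := PUnit
  A := S.obj 0
  B := Fin 2 → S.obj 0
  dA := fun _ _ => PUnit.unit
  dB := fun i c => c ⟨min i 1, by omega⟩
  sA' := fun h => absurd h (by omega)
  sA := fun _ x _ => x
  dd := fun _ _ _ _ _ => rfl
  ss := fun h => absurd h (by omega)
  ds_lt := fun h => absurd h (by omega)
  ds_self := fun i _ x => rfl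
  ds_succ := fun i _ x => rfl
  ds_gt := fun h => absurd h (by omega)

def st0zero (h0 : N = 0) : St S 0 where
  W := win0zero S
  eA := fun _ => Equiv.refl _
  eB := fun h => absurd h (by omega)
  dcomm1 := fun h => absurd h (by omega)
  scomm1 := fun h => absurd h (by omega)
  fillW := fun _ c _ => by
    refine ⟨c, fun i => ?_, fun y hy => funext fun i => ?_⟩
    · exact congrArg c (Fin.ext (by have := i.isLt; simp; omega))
    · rw [← hy i]
      exact congrArg y (Fin.ext (by have := i.isLt; simp; omega))
  lowTriv := fun _ _ x y => by cases x; cases y; rfl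
  top := mkTop S (win0zero S) (fun _ => Equiv.refl _) (fun h => absurd h (by omega))
    (fun h => absurd h (by omega)) (fun h => absurd h (by omega))

/-- The initial window when `N ≥ 1`. -/
def win0succ (h1 : 1 ≤ N) : Win 0 where
  A' := PUnit
  A := S.obj 0
  B := S.obj 1
  dA := fun _ _ => PUnit.unit
  dB := fun i x => S.d 0 h1 i x
  sA' := fun h => absurd h (by omega)
  sA := fun i x => S.s 0 h1 i x
  dd := fun _ _ _ _ _ => rfl
  ss := fun h => absurd h (by omega)
  ds_lt := fun h => absurd h (by omega)
  ds_self := fun i hi x => S.ds_self 0 h1 i hi x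
  ds_succ := fun i hi x => S.ds_succ 0 h1 i hi x
  ds_gt := fun h => absurd h (by omega)

def st0succ (h1 : 1 ≤ N) : St S 0 where
  W := win0succ S h1
  eA := fun _ => Equiv.refl _
  eB := fun _ => Equiv.refl _
  dcomm1 := fun _ _ _ _ => rfl
  scomm1 := fun _ _ _ _ => rfl
  fillW := fun h => absurd h (by omega)
  lowTriv := fun h => absurd h (by omega)
  top := mkTop S (win0succ S h1) (fun _ => Equiv.refl _) (fun _ => Equiv.refl _)
    (fun _ _ _ _ => rfl) (fun _ _ _ _ => rfl)

def st0 : St S 0 :=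
  if h : 1 ≤ N then st0succ S h else st0zero S (by omega)

/-- The full tower of states. -/
def st : (m : ℕ) → St S m := fun m => Nat.rec (st0 S) (fun _ p => stepFn S p) m

/-- The completion. -/
def Kc : SSetC where
  obj m := (st S m).W.A
  d m i x := (st S m).W.dB i x
  s m i x := (st S m).W.sA i x
  dd n i j h1 h2 x := (st S (n + 1)).W.dd i j h1 h2 x
  ss n i j h1 h2 x := (st S (n + 1)).W.ss (by omega) i j h1 (by omega) x
  ds_lt n i j h1 h2 x := (st S (n + 1)).W.ds_lt (by omega) i j h1 h2 x
  ds_self n i h x := (st S n).W.ds_self i h x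
  ds_succ n i h x := (st S n).W.ds_succ i h x
  ds_gt n i j h1 h2 x := (st S (n + 1)).W.ds_gt (by omega) i j h1 h2 x

/-- Identification of the completion with `S` in low dimensions. -/
def ee : ∀ k, k ≤ N → ((Kc S).obj k ≃ S.obj k) := fun k h => (st S k).eA h

lemma ee_d (k : ℕ) (h : k + 1 ≤ N) (i : ℕ) (hi : i ≤ k + 1) (x : (Kc S).obj (k + 1)) :
    ee S k (Nat.le_of_succ_le h) ((Kc S).d k i x) = S.d k h i (ee S (k + 1) h x) :=
  (st S k).dcomm1 h i hi x

lemma ee_s (k : ℕ) (h : k + 1 ≤ N) (i : ℕ) (hi : i ≤ k) (x : (Kc S).obj k) :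
    ee S (k + 1) h ((Kc S).s k i x) = S.s k h i (ee S k (Nat.le_of_succ_le h) x) :=
  (st S k).scomm1 h i hi x

lemma fillK (k : ℕ) (hk : N ≤ k) (c : Fin (k + 2) → (Kc S).obj k) (hc : (Kc S).Compat c) :
    ∃! x : (Kc S).obj (k + 1), (Kc S).bdry x = c := by
  have h' : ∀ a b : Fin (k + 2), (a : ℕ) < (b : ℕ) →
      (st S k).W.dA a (c b) = (st S k).W.dA ((b : ℕ) - 1) (c a) := by
    match k, hk, c, hc with
    | 0, hk, c, hc => exact fun a b hab => (st S 0).lowTriv hk rfl _ _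
    | (k + 1), hk, c, hc => exact hc
  obtain ⟨x, hx, hu⟩ := (st S k).fillW hk c h'
  exact ⟨x, funext hx, fun y hy => hu y (fun i => congrFun hy i)⟩

lemma bdry_compat : ∀ {k : ℕ} (x : (Kc S).obj (k + 1)), (Kc S).Compat ((Kc S).bdry x)
  | 0, x => trivial
  | (k + 1), x => fun i j hij => (Kc S).dd k i j hij (by have := j.isLt; omega) x

lemma bdryInj (k : ℕ) (hk : N ≤ k) {x y : (Kc S).obj (k + 1)}
    (h : (Kc S).bdry x = (Kc S).bdry y) : x = y := by
  obtain ⟨z, hz, hu⟩ := fillK S k hk ((Kc S).bdry x) (bdry_compat S x)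
  rw [hu x rfl, hu y h.symm]

end Tower
section Main

variable {N : ℕ} (S : SkelC N)

lemma hornTransfer (m : ℕ) (h : m ≤ N) (k : ℕ) (c : Fin (m + 2) → (Kc S).obj m)
    (hc : (Kc S).HornCompat k c) :
    S.SkelHornCompat h k (fun i => ee S m h (c i)) := by
  match m, h, c, hc with
  | 0, h, c, hc => trivial
  | (m + 1), h, c, hc =>
    intro i j hi hj hij
    show S.d m h i (ee S (m + 1) h (c j)) = S.d m h ((j : ℕ) - 1) (ee S (m + 1) h (c i))
    rw [← ee_d S m h i (by have := j.isLt; omega) (c j),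
      ← ee_d S m h ((j : ℕ) - 1) (by have := j.isLt; omega) (c i), hc i j hi hj hij]

lemma compatOfSkel (c : Fin (N + 2) → (Kc S).obj N)
    (hc : S.SkelCompat (le_refl N) (fun i => ee S N (le_refl N) (c i))) :
    (Kc S).Compat c := by
  match N, S, c, hc with
  | 0, S, c, hc => trivial
  | (n + 1), S, c, hc =>
    intro i j hij
    apply (ee S n (by omega)).injective
    rw [ee_d S n (le_refl (n + 1)) i (by have := j.isLt; omega) (c j),
      ee_d S n (le_refl (n + 1)) ((j : ℕ) - 1) (by have := j.isLt; omega) (c i)]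
    exact hc i j hij

lemma sameBdryTransfer (n : ℕ) (h : n ≤ N) (x y : (Kc S).obj n) (hsb : (Kc S).SameBdry x y) :
    S.SkelSameBdry h (ee S n h x) (ee S n h y) := by
  match n, h, x, y, hsb with
  | 0, _, _, _, _ => trivial
  | (q + 1), h, x, y, hsb =>
    intro i
    rw [← ee_d S q h i (by have := i.isLt; omega) x,
      ← ee_d S q h i (by have := i.isLt; omega) y,
      show (Kc S).d q (i : ℕ) x = (Kc S).d q (i : ℕ) y from congrFun hsb i]

theorem kanK (hS : S.SkelIsKan) : (Kc S).IsKan := by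
  intro m k hk c hc
  by_cases hm : m + 1 ≤ N
  · obtain ⟨x', hx'⟩ := hS.1 m hm k hk (fun i => ee S m (Nat.le_of_succ_le hm) (c i))
      (hornTransfer S m (Nat.le_of_succ_le hm) k c hc)
    refine ⟨(ee S (m + 1) hm).symm x', fun i hik => ?_⟩
    apply (ee S m (Nat.le_of_succ_le hm)).injective
    rw [ee_d S m hm i (by have := i.isLt; omega), Equiv.apply_symm_apply, hx' i hik]
  · by_cases hmN : m = N
    · subst hmN
      obtain ⟨xk, hxk⟩ := hS.2 k hk (fun i => ee S m (le_refl m) (c i))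
        (hornTransfer S m (le_refl m) k c hc)
      set y : (Kc S).obj m := (ee S m (le_refl m)).symm xk with hydef
      have hupd : (fun i => ee S m (le_refl m) (Function.update c ⟨k, by omega⟩ y i)) =
          Function.update (fun i => ee S m (le_refl m) (c i)) ⟨k, by omega⟩ xk := by
        funext i
        rcases eq_or_ne i ⟨k, by omega⟩ with rfl | hne
        · rw [Function.update_self, Function.update_self, hydef, Equiv.apply_symm_apply]
        · rw [Function.update_of_ne hne, Function.update_of_ne hne]
      have uc : (Kc S).Compat (Function.update c ⟨k, by omega⟩ y) := by
        apply compatOfSkel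
        rw [hupd]
        exact hxk
      obtain ⟨x, hx, -⟩ := fillK S m (le_refl m) _ uc
      exact ⟨x, fun i hik =>
        (congrFun hx i).trans (Function.update_of_ne (Fin.ne_of_val_ne hik) _ _)⟩
    · obtain ⟨m', rfl⟩ : ∃ m', m = m' + 1 := ⟨m - 1, by omega⟩
      have hNm' : N ≤ m' := by omega
      have tc : (Kc S).Compat (fun a : Fin (m' + 2) =>
          if (a : ℕ) < k then (Kc S).d m' (k - 1) (c ⟨(a : ℕ), by have := a.isLt; omega⟩)
          else (Kc S).d m' k (c ⟨(a : ℕ) + 1, by have := a.isLt; omega⟩)) := by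
        cases m' with
        | zero => trivial
        | succ q =>
          intro i j hij
          simp only []
          have hi' := i.isLt
          have hj' := j.isLt
          have hcc : ∀ a b : ℕ, (ha : a < q + 4) → (hb : b < q + 4) → a ≠ k → b ≠ k → a < b →
              (Kc S).d (q + 1) a (c ⟨b, hb⟩) = (Kc S).d (q + 1) (b - 1) (c ⟨a, ha⟩) :=
            fun a b ha hb h1 h2 h3 => hc ⟨a, ha⟩ ⟨b, hb⟩ h1 h2 h3
          have ddc : ∀ a b : ℕ, a < b → b ≤ q + 2 → ∀ z : (Kc S).obj (q + 2),
              (Kc S).d q a ((Kc S).d (q + 1) b z) = (Kc S).d q (b - 1) ((Kc S).d (q + 1) a z) :=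
            fun a b h1 h2 z => (Kc S).dd q a b h1 h2 z
          by_cases hjk : (j : ℕ) < k
          · rw [if_pos hjk, if_pos (show (i : ℕ) < k by omega)]
            rw [ddc (i : ℕ) (k - 1) (by omega) (by omega),
              hcc (i : ℕ) (j : ℕ) (by omega) (by omega) (by omega) (by omega) hij,
              ddc ((j : ℕ) - 1) (k - 1) (by omega) (by omega)]
          · by_cases hik : (i : ℕ) < k
            · rw [if_pos hik, if_neg hjk]
              rw [ddc (i : ℕ) k hik (by omega),
                hcc (i : ℕ) ((j : ℕ) + 1) (by omega) (by omega) (by omega) (by omega) (by omega),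
                show (j : ℕ) + 1 - 1 = (j : ℕ) by omega,
                ddc (k - 1) (j : ℕ) (by omega) (by omega)]
            · rw [if_neg hik, if_neg hjk]
              have h7 := ddc k ((i : ℕ) + 1) (by omega) (by omega)
                (c ⟨(j : ℕ) + 1, by omega⟩)
              rw [show (i : ℕ) + 1 - 1 = (i : ℕ) by omega] at h7
              rw [← h7,
                hcc ((i : ℕ) + 1) ((j : ℕ) + 1) (by omega) (by omega) (by omega) (by omega)
                  (by omega),
                show (j : ℕ) + 1 - 1 = (j : ℕ) by omega,
                ddc k (j : ℕ) (by omega) (by omega)]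
      obtain ⟨y, hy, -⟩ := fillK S m' hNm' _ tc
      have hyd : ∀ a : ℕ, (ha : a ≤ m' + 1) →
          (Kc S).d m' a y = if a < k then (Kc S).d m' (k - 1) (c ⟨a, by omega⟩)
            else (Kc S).d m' k (c ⟨a + 1, by omega⟩) :=
        fun a ha => congrFun hy ⟨a, by omega⟩
      have uc : (Kc S).Compat (Function.update c ⟨k, by omega⟩ y) := by
        have hne : ∀ (i : Fin (m' + 3)) (hik : (i : ℕ) ≠ k),
            Function.update c ⟨k, by omega⟩ y i = c i :=
          fun i hik => Function.update_of_ne (Fin.ne_of_val_ne hik) _ _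
        have hat : Function.update c ⟨k, by omega⟩ y ⟨k, by omega⟩ = y :=
          Function.update_self _ _ _
        intro i j hij
        rcases eq_or_ne (i : ℕ) k with hik | hik
        · have hjk : (j : ℕ) ≠ k := by omega
          have hieq : i = ⟨k, by omega⟩ := Fin.ext hik
          rw [hieq, hat, hne j hjk]
          show (Kc S).d m' k (c j) = (Kc S).d m' ((j : ℕ) - 1) y
          rw [hyd ((j : ℕ) - 1) (by have := j.isLt; omega),
            if_neg (show ¬ ((j : ℕ) - 1 < k) by omega)]
          congr 1
          congr 1
          apply Fin.ext
          show (j : ℕ) = (j : ℕ) - 1 + 1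
          omega
        · rcases eq_or_ne (j : ℕ) k with hjk | hjk
          · have hjeq : j = ⟨k, by omega⟩ := Fin.ext hjk
            rw [hjeq, hat, hne i hik]
            show (Kc S).d m' (i : ℕ) y = (Kc S).d m' (k - 1) (c i)
            rw [hyd (i : ℕ) (by have := i.isLt; omega), if_pos (show (i : ℕ) < k by omega)]
          · rw [hne i hik, hne j hjk]
            exact hc i j hik hjk hij
      obtain ⟨x, hx, -⟩ := fillK S (m' + 1) (by omega) _ uc
      exact ⟨x, fun i hik =>
        (congrFun hx i).trans (Function.update_of_ne (Fin.ne_of_val_ne hik) _ _)⟩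

lemma vertHomot (h0 : N = 0) (b x : (Kc S).obj 0) :
    (Kc S).Homotopic x ((Kc S).basept b 0) := by
  obtain ⟨z, hz, -⟩ := fillK S 0 (by omega) ((Kc S).homotopyTuple x ((Kc S).basept b 0)) trivial
  exact ⟨z, hz⟩

lemma sphHomot (b : (Kc S).obj 0) (k : ℕ) (hk : N ≤ k + 1) (x : (Kc S).obj (k + 1))
    (hx : (Kc S).IsSph b x) : (Kc S).Homotopic x ((Kc S).basept b (k + 1)) := by
  have hx' : ∀ a : ℕ, a ≤ k + 1 → (Kc S).d k a x = (Kc S).basept b k :=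
    fun a ha => hx ⟨a, by omega⟩
  have ent : ∀ (l : Fin (k + 3)) (a : ℕ), a ≤ k + 1 →
      (Kc S).d k a ((Kc S).homotopyTuple x ((Kc S).basept b (k + 1)) l) = (Kc S).basept b k := by
    intro l a ha
    show (Kc S).d k a (if (l : ℕ) < k + 1 then (Kc S).s k k ((Kc S).d k (l : ℕ) x)
      else if (l : ℕ) = k + 1 then x else (Kc S).basept b (k + 1)) = _
    by_cases h1 : (l : ℕ) < k + 1
    · rw [if_pos h1, hx' (l : ℕ) (by omega), (Kc S).s_basept b k k (le_refl k),
        (Kc S).d_basept b k a ha]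
    · rw [if_neg h1]
      by_cases h2 : (l : ℕ) = k + 1
      · rw [if_pos h2]; exact hx' a ha
      · rw [if_neg h2]; exact (Kc S).d_basept b k a ha
  have hc : (Kc S).Compat ((Kc S).homotopyTuple x ((Kc S).basept b (k + 1))) := by
    intro i j hij
    rw [ent j (i : ℕ) (by have := j.isLt; omega), ent i ((j : ℕ) - 1) (by have := j.isLt; omega)]
  obtain ⟨z, hz, -⟩ := fillK S (k + 1) hk _ hc
  exact ⟨z, hz⟩

lemma homotTupleTransfer (n : ℕ) (hn1 : n + 1 ≤ N) (x y : (Kc S).obj n) (i : Fin (n + 2)) :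
    ee S n (Nat.le_of_succ_le hn1) ((Kc S).homotopyTuple x y i) =
    S.skelHomotopyTuple hn1 (ee S n (Nat.le_of_succ_le hn1) x)
      (ee S n (Nat.le_of_succ_le hn1) y) i := by
  match n, hn1, x, y, i with
  | 0, hn1, x, y, i => fin_cases i <;> rfl
  | (q + 1), hn1, x, y, i =>
    have h' : q + 1 ≤ N := Nat.le_of_succ_le hn1
    show ee S (q + 1) h' (if (i : ℕ) < q + 1 then (Kc S).s q q ((Kc S).d q (i : ℕ) x)
        else if (i : ℕ) = q + 1 then x else y)
      = (if (i : ℕ) < q + 1 then S.s q h' q (S.d q h' (i : ℕ) (ee S (q + 1) h' x))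
        else if (i : ℕ) = q + 1 then ee S (q + 1) h' x else ee S (q + 1) h' y)
    split_ifs with h1 h2
    · rw [ee_s S q h' q (le_refl q), ee_d S q h' (i : ℕ) (by omega)]
    · rfl
    · rfl

theorem minK (hS : S.SkelMinimal) : (Kc S).Minimal := by
  intro n x y hsb hht
  rcases lt_trichotomy n N with hn | hn | hn
  · have hn1 : n + 1 ≤ N := hn
    have h' := Nat.le_of_succ_le hn1
    apply (ee S n h').injective
    apply hS.1 n hn1 _ _ (sameBdryTransfer S n h' x y hsb)
    obtain ⟨z, hz⟩ := hht
    refine ⟨ee S (n + 1) hn1 z, fun i => ?_⟩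
    rw [← ee_d S n hn1 (i : ℕ) (by have := i.isLt; omega) z,
      show (Kc S).d n (i : ℕ) z = (Kc S).homotopyTuple x y i from congrFun hz i,
      homotTupleTransfer S n hn1 x y i]
  · subst hn
    apply (ee S n (le_refl n)).injective
    exact hS.2 _ _ (sameBdryTransfer S n (le_refl n) x y hsb)
  · obtain ⟨q, rfl⟩ : ∃ q, n = q + 1 := ⟨n - 1, by omega⟩
    exact bdryInj S q (by omega) hsb

end Main
section Adj

variable {N : ℕ} (S : SkelC N)

/-- A pair of consecutive levels of a lift of a skeleton map. -/
structure LiftPair (K' : SSetC) (g : SkelMap (SkelC.skelRestrict N K') S) (k : ℕ) : Type where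
  F : K'.obj k → (Kc S).obj k
  F' : K'.obj (k + 1) → (Kc S).obj (k + 1)
  pd : ∀ i : ℕ, i ≤ k + 1 → ∀ x, F (K'.d k i x) = (Kc S).d k i (F' x)
  ps : ∀ i : ℕ, i ≤ k → ∀ x, F' (K'.s k i x) = (Kc S).s k i (F x)
  pl : ∀ h : k ≤ N, ∀ x, F x = (ee S k h).symm (g.app k h x)
  pl' : ∀ h : k + 1 ≤ N, ∀ x, F' x = (ee S (k + 1) h).symm (g.app (k + 1) h x)

noncomputable def liftTop (K' : SSetC) (g : SkelMap (SkelC.skelRestrict N K') S) (k : ℕ)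
    (p : LiftPair S K' g k) :
    Σ' F'' : K'.obj (k + 2) → (Kc S).obj (k + 2),
      (∀ i : ℕ, i ≤ k + 2 → ∀ x, p.F' (K'.d (k + 1) i x) = (Kc S).d (k + 1) i (F'' x)) ∧
      (∀ i : ℕ, i ≤ k + 1 → ∀ x, F'' (K'.s (k + 1) i x) = (Kc S).s (k + 1) i (p.F' x)) ∧
      (∀ h : k + 2 ≤ N, ∀ x, F'' x = (ee S (k + 2) h).symm (g.app (k + 2) h x)) := by
  by_cases h2 : k + 2 ≤ N
  · refine ⟨fun x => (ee S (k + 2) h2).symm (g.app (k + 2) h2 x), ?_, ?_, fun h x => rfl⟩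
    · intro i hi x
      have h4 : g.app (k + 1) (Nat.le_of_succ_le h2) (K'.d (k + 1) i x)
          = S.d (k + 1) h2 i (g.app (k + 2) h2 x) := g.comm_d (k + 1) h2 i hi x
      rw [p.pl' (Nat.le_of_succ_le h2), h4]
      apply (ee S (k + 1) (Nat.le_of_succ_le h2)).injective
      rw [Equiv.apply_symm_apply, ee_d S (k + 1) h2 i hi, Equiv.apply_symm_apply]
    · intro i hi x
      simp only []
      have h5 : g.app (k + 2) h2 (K'.s (k + 1) i x)
          = S.s (k + 1) h2 i (g.app (k + 1) (Nat.le_of_succ_le h2) x) := g.comm_s (k + 1) h2 i hi x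
      rw [h5, p.pl' (Nat.le_of_succ_le h2)]
      apply (ee S (k + 2) h2).injective
      rw [Equiv.apply_symm_apply, ee_s S (k + 1) h2 i hi, Equiv.apply_symm_apply]
  · have hN : N ≤ k + 1 := by omega
    have comp : ∀ x : K'.obj (k + 2),
        (Kc S).Compat (fun i : Fin (k + 3) => p.F' (K'.d (k + 1) (i : ℕ) x)) := by
      intro x i j hij
      have e1 : (Kc S).d k (i : ℕ) (p.F' (K'.d (k + 1) (j : ℕ) x))
          = p.F (K'.d k (i : ℕ) (K'.d (k + 1) (j : ℕ) x)) :=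
        (p.pd (i : ℕ) (by have := j.isLt; omega) _).symm
      have e2 : (Kc S).d k ((j : ℕ) - 1) (p.F' (K'.d (k + 1) (i : ℕ) x))
          = p.F (K'.d k ((j : ℕ) - 1) (K'.d (k + 1) (i : ℕ) x)) :=
        (p.pd ((j : ℕ) - 1) (by have := j.isLt; omega) _).symm
      rw [e1, e2, K'.dd k (i : ℕ) (j : ℕ) hij (by have := j.isLt; omega) x]
    refine ⟨fun x => (fillK S (k + 1) hN _ (comp x)).exists.choose, ?_, ?_,
      fun h x => absurd h (by omega)⟩
    · intro i hi x
      exact (congrFun (fillK S (k + 1) hN _ (comp x)).exists.choose_spec ⟨i, by omega⟩).symm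
    · intro i hi x
      apply bdryInj S (k + 1) hN
      funext j
      have hj := j.isLt
      show (Kc S).d (k + 1) (j : ℕ) _ = (Kc S).d (k + 1) (j : ℕ) ((Kc S).s (k + 1) i (p.F' x))
      rw [show (Kc S).d (k + 1) (j : ℕ)
            ((fillK S (k + 1) hN _ (comp (K'.s (k + 1) i x))).exists.choose)
          = p.F' (K'.d (k + 1) (j : ℕ) (K'.s (k + 1) i x)) from
        congrFun (fillK S (k + 1) hN _ (comp (K'.s (k + 1) i x))).exists.choose_spec j]
      by_cases h3 : (j : ℕ) < i
      · rw [K'.ds_lt k (j : ℕ) i h3 hi, (Kc S).ds_lt k (j : ℕ) i h3 hi,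
          p.ps (i - 1) (by omega), p.pd (j : ℕ) (by omega)]
      · by_cases h4 : (j : ℕ) ≤ i + 1
        · rcases (show (j : ℕ) = i ∨ (j : ℕ) = i + 1 by omega) with h5 | h5
          · rw [h5, K'.ds_self (k + 1) i hi, (Kc S).ds_self (k + 1) i hi]
          · rw [h5, K'.ds_succ (k + 1) i hi, (Kc S).ds_succ (k + 1) i hi]
        · have h6 : i + 1 < (j : ℕ) := by omega
          rw [K'.ds_gt k (j : ℕ) i h6 (by omega), (Kc S).ds_gt k (j : ℕ) i h6 (by omega),
            p.ps i (by omega), p.pd ((j : ℕ) - 1) (by omega)]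

noncomputable def liftBase (K' : SSetC) (g : SkelMap (SkelC.skelRestrict N K') S) :
    LiftPair S K' g 0 := by
  by_cases h1 : 1 ≤ N
  · exact
    { F := fun x => (ee S 0 (Nat.zero_le N)).symm (g.app 0 (Nat.zero_le N) x)
      F' := fun x => (ee S 1 h1).symm (g.app 1 h1 x)
      pd := by
        intro i hi x
        have h4 : g.app 0 (Nat.zero_le N) (K'.d 0 i x) = S.d 0 h1 i (g.app 1 h1 x) :=
          g.comm_d 0 h1 i hi x
        rw [h4]
        apply (ee S 0 (Nat.zero_le N)).injective
        rw [Equiv.apply_symm_apply, ee_d S 0 h1 i hi, Equiv.apply_symm_apply]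
      ps := by
        intro i hi x
        have h5 : g.app 1 h1 (K'.s 0 i x) = S.s 0 h1 i (g.app 0 (Nat.zero_le N) x) :=
          g.comm_s 0 h1 i hi x
        rw [h5]
        apply (ee S 1 h1).injective
        rw [Equiv.apply_symm_apply, ee_s S 0 h1 i hi, Equiv.apply_symm_apply]
      pl := fun h x => rfl
      pl' := fun h x => rfl }
  · have hN : N ≤ 0 := by omega
    have comp : ∀ x : K'.obj 1, (Kc S).Compat (fun i : Fin 2 =>
        (ee S 0 (Nat.zero_le N)).symm (g.app 0 (Nat.zero_le N) (K'.d 0 (i : ℕ) x))) :=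
      fun _ => trivial
    exact
    { F := fun x => (ee S 0 (Nat.zero_le N)).symm (g.app 0 (Nat.zero_le N) x)
      F' := fun x => (fillK S 0 hN _ (comp x)).exists.choose
      pd := by
        intro i hi x
        exact (congrFun (fillK S 0 hN _ (comp x)).exists.choose_spec ⟨i, by omega⟩).symm
      ps := by
        intro i hi x
        interval_cases i
        apply bdryInj S 0 hN
        funext j
        show (Kc S).d 0 (j : ℕ) _ = (Kc S).d 0 (j : ℕ)
          ((Kc S).s 0 0 ((ee S 0 (Nat.zero_le N)).symm (g.app 0 (Nat.zero_le N) x)))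
        rw [show (Kc S).d 0 (j : ℕ) ((fillK S 0 hN _ (comp (K'.s 0 0 x))).exists.choose)
            = (ee S 0 (Nat.zero_le N)).symm
                (g.app 0 (Nat.zero_le N) (K'.d 0 (j : ℕ) (K'.s 0 0 x))) from
          congrFun (fillK S 0 hN _ (comp (K'.s 0 0 x))).exists.choose_spec j]
        have h7 := K'.ds_succ 0 0 (le_refl 0) x
        have h8 := (Kc S).ds_succ 0 0 (le_refl 0)
          ((ee S 0 (Nat.zero_le N)).symm (g.app 0 (Nat.zero_le N) x))
        rw [Nat.zero_add] at h7 h8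
        rcases (show (j : ℕ) = 0 ∨ (j : ℕ) = 1 from by have := j.isLt; omega) with h5 | h5
        · rw [h5, K'.ds_self 0 0 (le_refl 0), (Kc S).ds_self 0 0 (le_refl 0)]
        · rw [h5, h7, h8]
      pl := fun h x => rfl
      pl' := fun h x => absurd h (by omega) }

noncomputable def liftQ (K' : SSetC) (g : SkelMap (SkelC.skelRestrict N K') S) :
    (k : ℕ) → LiftPair S K' g k := fun k =>
  Nat.rec (liftBase S K' g)
    (fun k p =>
      { F := p.F'
        F' := (liftTop S K' g k p).1
        pd := (liftTop S K' g k p).2.1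
        ps := (liftTop S K' g k p).2.2.1
        pl := p.pl'
        pl' := (liftTop S K' g k p).2.2.2 }) k

noncomputable def liftF (K' : SSetC) (g : SkelMap (SkelC.skelRestrict N K') S) : SSetC.SMap K' (Kc S) where
  app k := (liftQ S K' g k).F
  comm_d n i hi x := (liftQ S K' g n).pd i hi x
  comm_s n i hi x := (liftQ S K' g n).ps i hi x

def resF (K' : SSetC) (f : SSetC.SMap K' (Kc S)) : SkelMap (SkelC.skelRestrict N K') S where
  app k h x := ee S k h (f.app k x)
  comm_d k h i hi x := by
    show ee S k (Nat.le_of_succ_le h) (f.app k (K'.d k i x))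
      = S.d k h i (ee S (k + 1) h (f.app (k + 1) x))
    rw [f.comm_d k i hi x, ee_d S k h i hi]
  comm_s k h i hi x := by
    show ee S (k + 1) h (f.app (k + 1) (K'.s k i x))
      = S.s k h i (ee S k (Nat.le_of_succ_le h) (f.app k x))
    rw [f.comm_s k i hi x, ee_s S k h i hi]

lemma smap_ext {K L : SSetC} {f g : SSetC.SMap K L} (h : f.app = g.app) : f = g := by
  cases f; cases g; cases h; rfl

lemma skelmap_ext {M : ℕ} {X Y : SkelC M} {f g : SkelMap X Y} (h : f.app = g.app) : f = g := by
  cases f; cases g; cases h; rfl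

theorem resF_bij (K' : SSetC) : Function.Bijective (resF S K') := by
  constructor
  · intro f f' hff
    have happ : ∀ k (hk : k ≤ N) x, ee S k hk (f.app k x) = ee S k hk (f'.app k x) :=
      fun k hk x => congrFun (congrFun (congrFun (congrArg SkelMap.app hff) k) hk) x
    have key : ∀ k (x : K'.obj k), f.app k x = f'.app k x := by
      intro k
      induction k with
      | zero => exact fun x => (ee S 0 (Nat.zero_le N)).injective (happ 0 _ x)
      | succ k ih =>
        intro x
        by_cases hk : k + 1 ≤ N
        · exact (ee S (k + 1) hk).injective (happ (k + 1) hk x)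
        · apply bdryInj S k (by omega)
          funext i
          show (Kc S).d k (i : ℕ) (f.app (k + 1) x) = (Kc S).d k (i : ℕ) (f'.app (k + 1) x)
          rw [← f.comm_d k (i : ℕ) (by have := i.isLt; omega) x,
            ← f'.comm_d k (i : ℕ) (by have := i.isLt; omega) x, ih _]
    exact smap_ext (funext fun k => funext (key k))
  · intro g
    refine ⟨liftF S K' g, skelmap_ext ?_⟩
    funext k hk x
    show ee S k hk ((liftQ S K' g k).F x) = g.app k hk x
    rw [(liftQ S K' g k).pl hk x, Equiv.apply_symm_apply]

end Adj
end SkelCompletion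
open SSetC SkelC in
/-- Every simplicial `N`-skeleton `S` has a canonical completion
`Ŝ`: a simplicial set agreeing with `S` up to dimension `N` in which, in every
dimension `k + 1 > N`, the simplices correspond bijectively to the `k`-cycles via
their boundaries (i.e. every cycle has a unique filling).  Moreover: (1) if `S`
has the Kan property then `Ŝ` is a Kan complex and `π_k(Ŝ, ⋆) = 0` for all
`k ≥ N` and every base point; (2) if `S` is minimal then so is `Ŝ`; (3) the
completion is right-adjoint to the restriction `R_N`: for every simplicial set
`K'` there is a (natural) bijection `Hom_sSet(K', Ŝ) ≅ Hom_sSk(R_N K', S)` given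
by restricting and applying the identification of `Ŝ` with `S` in dimensions
`≤ N`. -/
theorem skeleton_completion (N : ℕ) (S : SkelC N) :
    ∃ (Kc : SSetC) (e : ∀ k, k ≤ N → (Kc.obj k ≃ S.obj k)),
      (∀ (k : ℕ) (h : k + 1 ≤ N) (i : ℕ), i ≤ k + 1 → ∀ x : Kc.obj (k + 1),
        e k (Nat.le_of_succ_le h) (Kc.d k i x) = S.d k h i (e (k + 1) h x)) ∧
      (∀ (k : ℕ) (h : k + 1 ≤ N) (i : ℕ), i ≤ k → ∀ x : Kc.obj k,
        e (k + 1) h (Kc.s k i x) = S.s k h i (e k (Nat.le_of_succ_le h) x)) ∧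
      (∀ k : ℕ, N ≤ k → ∀ c : Fin (k + 2) → Kc.obj k, Kc.Compat c →
        ∃! x : Kc.obj (k + 1), Kc.bdry x = c) ∧
      (S.SkelIsKan → Kc.IsKan ∧
        (∀ b : Kc.obj 0,
          (N = 0 → ∀ x : Kc.obj 0, Kc.Homotopic x (Kc.basept b 0)) ∧
          (∀ k : ℕ, N ≤ k + 1 → ∀ x : Kc.obj (k + 1),
            Kc.IsSph b x → Kc.Homotopic x (Kc.basept b (k + 1))))) ∧
      (S.SkelMinimal → Kc.Minimal) ∧
      (∀ K' : SSetC, ∃ bij : SMap K' Kc ≃ SkelMap (skelRestrict N K') S,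
        ∀ (f : SMap K' Kc) (k : ℕ) (h : k ≤ N) (x : K'.obj k),
          (bij f).app k h x = e k h (f.app k x)) := by
  refine ⟨SkelCompletion.Kc S, SkelCompletion.ee S, SkelCompletion.ee_d S, SkelCompletion.ee_s S,
    SkelCompletion.fillK S,
    fun hS => ⟨SkelCompletion.kanK S hS, fun b =>
      ⟨fun h0 x => SkelCompletion.vertHomot S h0 b x,
       fun k hk x hx => SkelCompletion.sphHomot S b k hk x hx⟩⟩,
    SkelCompletion.minK S,
    fun K' => ⟨Equiv.ofBijective _ (SkelCompletion.resF_bij S K'), fun f k h x => rfl⟩⟩
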